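/- Let G be a connected r-regular graph with r ≥ 2, with n vertices and m edges, and for each i = 1,…,m let H_i be an r_1-regular graph on t ≥ 1 vertices (all H_i have the same number of vertices t and the same degree r_1). Then every real root α of the quadratic equation (2r_1 + r_1·t + t + 2)x² − (2r_1 + r_1·t + 2t + 4)x + 2 = 0 is an eigenvalue of the normalized Laplacian of the generalized subdivision-edge corona S(G)⊖∧_{i=1}^m H_i of multiplicity at least m − n; equivalently, (x − α)^{m−n} divides the characteristic polynomial of 𝓛(S(G)⊖∧_{i=1}^m H_i). -/

import Mathlib

open Matrix Polynomial

/-- Adjacency matrix over `ℝ` (with classical decidability). -/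
noncomputable def adjM {V : Type*} [Fintype V] [DecidableEq V] (G : SimpleGraph V) :
    Matrix V V ℝ :=
  letI : DecidableRel G.Adj := Classical.decRel _
  G.adjMatrix ℝ

/-- Degree of a vertex (with classical decidability). -/
noncomputable def cdeg {V : Type*} [Fintype V] (G : SimpleGraph V) (v : V) : ℕ :=
  letI : DecidableRel G.Adj := Classical.decRel _
  G.degree v

/-- The normalized Laplacian `𝓛(G) = I - D^{-1/2} A D^{-1/2}` of a finite graph. -/
noncomputable def normLap {V : Type*} [Fintype V] [DecidableEq V] (G : SimpleGraph V) :
    Matrix V V ℝ :=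
  1 - Matrix.diagonal (fun v => (Real.sqrt (cdeg G v))⁻¹) * adjM G
      * Matrix.diagonal (fun v => (Real.sqrt (cdeg G v))⁻¹)

/-- The generalized subdivision-edge corona `S(G) ⊖ ∧ᵢ Hᵢ`: take the subdivision `S(G)`
(vertices of `G` together with one inserted vertex per edge, each edge `uv` replaced by the
path `u–e–v`), add a disjoint copy of each `Hₑ`, and join the inserted vertex corresponding
to the edge `e` to every vertex of `Hₑ`. -/
def sec {n : ℕ} (G : SimpleGraph (Fin n)) (t : G.edgeSet → ℕ)
    (H : ∀ e : G.edgeSet, SimpleGraph (Fin (t e))) :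
    SimpleGraph (Fin n ⊕ (G.edgeSet ⊕ Σ e : G.edgeSet, Fin (t e))) :=
  SimpleGraph.fromRel (fun a b =>
    match a, b with
    | Sum.inl v, Sum.inr (Sum.inl e) => v ∈ (e : Sym2 (Fin n))
    | Sum.inr (Sum.inl e), Sum.inr (Sum.inr ⟨f, _⟩) => e = f
    | Sum.inr (Sum.inr ⟨e, w⟩), Sum.inr (Sum.inr ⟨f, w'⟩) =>
        ∃ h : e = f, (H f).Adj (h ▸ w) w'
    | _, _ => False)

open Sum Module Finset


set_option linter.unusedSectionVars false
section adj
variable {n t : ℕ} (G : SimpleGraph (Fin n)) [DecidableRel G.Adj] (H : G.edgeSet → SimpleGraph (Fin t))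

local notation "S" => sec G (fun _ => t) H

lemma adj_VV (v v' : Fin n) : ¬ (S).Adj (inl v) (inl v') := by
  simp [sec, SimpleGraph.fromRel_adj]

lemma adj_VI (v : Fin n) (e : G.edgeSet) :
    (S).Adj (inl v) (inr (inl e)) ↔ v ∈ (e : Sym2 (Fin n)) := by
  simp [sec, SimpleGraph.fromRel_adj]

lemma adj_IV (v : Fin n) (e : G.edgeSet) :
    (S).Adj (inr (inl e)) (inl v) ↔ v ∈ (e : Sym2 (Fin n)) := by
  rw [SimpleGraph.adj_comm]; exact adj_VI G H v e

lemma adj_VH (v : Fin n) (p : Σ _ : G.edgeSet, Fin t) :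
    ¬ (S).Adj (inl v) (inr (inr p)) := by
  obtain ⟨e, w⟩ := p
  simp [sec, SimpleGraph.fromRel_adj]

lemma adj_II (e e' : G.edgeSet) : ¬ (S).Adj (inr (inl e)) (inr (inl e')) := by
  simp [sec, SimpleGraph.fromRel_adj]

lemma adj_IH (e : G.edgeSet) (p : Σ _ : G.edgeSet, Fin t) :
    (S).Adj (inr (inl e)) (inr (inr p)) ↔ e = p.1 := by
  obtain ⟨f, w⟩ := p
  simp [sec, SimpleGraph.fromRel_adj]

lemma adj_HH (p q : Σ _ : G.edgeSet, Fin t) :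
    (S).Adj (inr (inr p)) (inr (inr q)) ↔ p.1 = q.1 ∧ (H p.1).Adj p.2 (q.2) := by
  obtain ⟨e, w⟩ := p; obtain ⟨f, w'⟩ := q
  rw [sec, SimpleGraph.fromRel_adj]
  constructor
  · rintro ⟨hne, ⟨h, ha⟩ | ⟨h, ha⟩⟩
    · subst h; exact ⟨rfl, ha⟩
    · subst h; exact ⟨rfl, ha.symm⟩
  · rintro ⟨h, ha⟩
    dsimp at h ha
    subst h
    refine ⟨?_, Or.inl ⟨rfl, ha⟩⟩
    intro hc
    rw [Sum.inr.injEq, Sum.inr.injEq] at hc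
    have hw : w = w' := eq_of_heq (Sigma.mk.inj_iff.mp hc).2
    rw [hw] at ha
    exact (H e).irrefl ha

end adj

section deg

lemma cdeg_eq_degree {V : Type*} [Fintype V] (K : SimpleGraph V) [DecidableRel K.Adj] (v : V) :
    cdeg K v = K.degree v := by
  unfold cdeg
  congr!

lemma cdeg_eq_sum {V : Type*} [Fintype V] (K : SimpleGraph V) [DecidableRel K.Adj] (v : V) :
    cdeg K v = ∑ u, if K.Adj v u then 1 else 0 := by
  rw [cdeg_eq_degree]
  show (K.neighborFinset v).card = _
  rw [SimpleGraph.neighborFinset_eq_filter, Finset.card_filter]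

variable {n t : ℕ} (G : SimpleGraph (Fin n)) [DecidableRel G.Adj] (H : G.edgeSet → SimpleGraph (Fin t))

local notation "S" => sec G (fun _ => t) H

lemma sum_mem_edge (e : G.edgeSet) :
    ∑ v : Fin n, (if v ∈ (e : Sym2 (Fin n)) then (1:ℕ) else 0) = 2 := by
  obtain ⟨e, he⟩ := e
  induction e using Sym2.ind with
  | _ u v =>
    rw [SimpleGraph.mem_edgeSet] at he
    have huv : u ≠ v := G.ne_of_adj he
    calc ∑ x : Fin n, (if x ∈ s(u,v) then (1:ℕ) else 0)
        = ∑ x : Fin n, ((if x = u then 1 else 0) + (if x = v then 1 else 0)) := by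
          apply Finset.sum_congr rfl; intro x _
          by_cases h1 : x = u <;> by_cases h2 : x = v <;> simp [Sym2.mem_iff, h1, h2] <;> simp_all
      _ = 2 := by rw [Finset.sum_add_distrib]; simp [Finset.sum_ite_eq']

lemma deg_I (e : G.edgeSet) : cdeg (S) (inr (inl e)) = t + 2 := by
  classical
  rw [cdeg_eq_sum, Fintype.sum_sum_type, Fintype.sum_sum_type, ← Finset.univ_sigma_univ,
    Finset.sum_sigma]
  have h1 : ∑ v : Fin n, (if (S).Adj (inr (inl e)) (inl v) then (1:ℕ) else 0) = 2 := by
    rw [← sum_mem_edge G e]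
    apply Finset.sum_congr rfl
    intro v _
    simp [adj_IV]
  rw [h1]
  have h2 : ∀ e' : G.edgeSet, (if (S).Adj (inr (inl e)) (inr (inl e')) then (1:ℕ) else 0) = 0 := by
    intro e'; simp [adj_II]
  have h3 : ∀ (f : G.edgeSet) (w : Fin t),
      (if (S).Adj (inr (inl e)) (inr (inr ⟨f, w⟩)) then (1:ℕ) else 0)
        = if e = f then 1 else 0 := by
    intro f w
    simp only [adj_IH]
  simp only [h2, h3, Finset.sum_const_zero, Finset.sum_const, Finset.sum_ite_eq,
    Finset.mem_univ, if_true, smul_eq_mul, Finset.card_univ, Fintype.card_fin, zero_add]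
  simp [mul_ite, Finset.sum_ite_eq]
  omega

lemma deg_H (r1 : ℕ) (hH : ∀ e w, cdeg (H e) w = r1) (p : Σ _ : G.edgeSet, Fin t) :
    cdeg (S) (inr (inr p)) = r1 + 1 := by
  classical
  obtain ⟨e, w⟩ := p
  rw [cdeg_eq_sum, Fintype.sum_sum_type, Fintype.sum_sum_type, ← Finset.univ_sigma_univ,
    Finset.sum_sigma]
  have h1 : ∀ v : Fin n, (if (S).Adj (inr (inr ⟨e, w⟩)) (inl v) then (1:ℕ) else 0) = 0 := by
    intro v
    simp [(S).adj_comm, adj_VH]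
  have h2 : ∀ e' : G.edgeSet, (if (S).Adj (inr (inr ⟨e, w⟩)) (inr (inl e')) then (1:ℕ) else 0)
      = if e' = e then 1 else 0 := by
    intro e'
    simp [(S).adj_comm, adj_IH, eq_comm]
  have h3 : ∑ f : G.edgeSet, ∑ w' : Fin t,
      (if (S).Adj (inr (inr ⟨e, w⟩)) (inr (inr ⟨f, w'⟩)) then (1:ℕ) else 0) = r1 := by
    rw [Finset.sum_eq_single e]
    · rw [← hH e w, cdeg_eq_sum]
      apply Finset.sum_congr rfl
      intro w' _
      simp [adj_HH]
    · intro f _ hf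
      apply Finset.sum_eq_zero
      intro w' _
      rw [if_neg]
      rw [adj_HH]
      rintro ⟨h, -⟩
      exact hf h.symm
    · intro h; exact absurd (Finset.mem_univ e) h
  simp only [h1, h2, h3, Finset.sum_const_zero, Finset.sum_ite_eq', Finset.mem_univ, if_true,
    zero_add]
  omega

end deg


lemma lemA {ι : Type*} [Fintype ι] [DecidableEq ι] (M : Matrix ι ι ℝ) (α : ℝ)
    (W : Submodule ℝ (ι → ℝ)) (hW : ∀ x ∈ W, M.mulVec x = α • x) :
    ((X : ℝ[X]) - C α) ^ (Module.finrank ℝ W) ∣ M.charpoly := by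
  set N : Matrix ι ι ℝ := M - α • 1 with hN
  have hker : ∀ x ∈ W, N.mulVec x = 0 := by
    intro x hx
    simp [hN, Matrix.sub_mulVec, hW x hx, Matrix.smul_mulVec, Matrix.one_mulVec]
  have h1 : (X : ℝ[X]) ^ (Module.finrank ℝ W) ∣ N.charpoly := by
    set φ : Module.End ℝ (ι → ℝ) := Matrix.toLin' N with hφ
    have hchar : φ.charpoly = N.charpoly := by
      rw [← LinearMap.charpoly_toMatrix φ (Pi.basisFun ℝ ι)]
      congr 1
      rw [hφ, LinearMap.toMatrix_eq_toMatrix', LinearMap.toMatrix'_toLin']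
    have hle : W ≤ φ.maxGenEigenspace 0 := by
      intro x hx
      rw [Module.End.mem_maxGenEigenspace]
      exact ⟨1, by simp [hφ, Matrix.toLin'_apply, hker x hx]⟩
    have hfr : Module.finrank ℝ W ≤ natTrailingDegree N.charpoly := by
      rw [← hchar, ← LinearMap.finrank_maxGenEigenspace_zero_eq]
      exact Submodule.finrank_mono hle
    rw [X_pow_dvd_iff]
    intro d hd
    exact coeff_eq_zero_of_lt_natTrailingDegree (lt_of_lt_of_le hd hfr)
  have h2 : (aeval ((X : ℝ[X]) - C α)) N.charpoly = M.charpoly := by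
    show (aeval ((X : ℝ[X]) - C α) : ℝ[X] →ₐ[ℝ] ℝ[X]).toRingHom N.charmatrix.det
        = M.charmatrix.det
    rw [RingHom.map_det]
    congr 1
    ext i j
    rcases eq_or_ne i j with rfl | hij
    · simp [charmatrix_apply_eq, hN, Matrix.sub_apply, Matrix.smul_apply, Matrix.one_apply,
        map_sub, aeval_X, aeval_C]
    · simp [charmatrix_apply_ne _ _ _ hij, hN, Matrix.sub_apply, Matrix.smul_apply,
        Matrix.one_apply_ne hij, aeval_C]
  obtain ⟨q, hq⟩ := h1
  refine ⟨aeval ((X : ℝ[X]) - C α) q, ?_⟩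
  rw [← h2, hq, _root_.map_mul, map_pow, aeval_X]

section main
open Finset

lemma sum_adj_real {V : Type*} [Fintype V] (K : SimpleGraph V) [DecidableRel K.Adj]
    (w : V) (c : ℝ) : ∑ u, (if K.Adj w u then c else 0) = (cdeg K w) * c := by
  rw [cdeg_eq_sum K w]
  push_cast
  rw [Finset.sum_mul]
  apply Finset.sum_congr rfl
  intro u _
  split_ifs <;> simp

theorem stmt7 {n m r t r1 : ℕ} (hr : 2 ≤ r) (ht : 1 ≤ t)
    (G : SimpleGraph (Fin n)) [DecidableRel G.Adj]
    (hconn : G.Connected) (hG : ∀ v, cdeg G v = r)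
    (hm : G.edgeFinset.card = m)
    (H : G.edgeSet → SimpleGraph (Fin t)) (hH : ∀ e w, cdeg (H e) w = r1)
    (α : ℝ)
    (hα : (2 * (r1 : ℝ) + r1 * t + t + 2) * α ^ 2
        - (2 * (r1 : ℝ) + r1 * t + 2 * t + 4) * α + 2 = 0) :
    ((X : Polynomial ℝ) - Polynomial.C α) ^ (m - n)
      ∣ (normLap (sec G (fun _ => t) H)).charpoly := by
  classical
  have e1 : (Real.sqrt ((t:ℝ)+2))⁻¹ * (Real.sqrt ((t:ℝ)+2))⁻¹ = ((t:ℝ)+2)⁻¹ := by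
    rw [← mul_inv, Real.mul_self_sqrt (by positivity)]
  have e2 : (Real.sqrt ((r1:ℝ)+1))⁻¹ * (Real.sqrt ((r1:ℝ)+1))⁻¹ = ((r1:ℝ)+1)⁻¹ := by
    rw [← mul_inv, Real.mul_self_sqrt (by positivity)]
  let L : (G.edgeSet → ℝ) →ₗ[ℝ] (Fin n → ℝ) :=
    { toFun := fun z v => ∑ e : G.edgeSet, if v ∈ (e : Sym2 (Fin n)) then z e else 0
      map_add' := by
        intro z z'; funext v
        show (∑ e : G.edgeSet, if v ∈ (e : Sym2 (Fin n)) then (z + z') e else 0)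
          = (∑ e : G.edgeSet, if v ∈ (e : Sym2 (Fin n)) then z e else 0)
            + (∑ e : G.edgeSet, if v ∈ (e : Sym2 (Fin n)) then z' e else 0)
        rw [← Finset.sum_add_distrib]
        apply Finset.sum_congr rfl
        intro e _
        split_ifs <;> simp
      map_smul' := by
        intro c z; funext v
        show (∑ e : G.edgeSet, if v ∈ (e : Sym2 (Fin n)) then (c • z) e else 0)
          = c • (∑ e : G.edgeSet, if v ∈ (e : Sym2 (Fin n)) then z e else 0)
        rw [smul_eq_mul, Finset.mul_sum]
        apply Finset.sum_congr rfl
        intro e _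
        split_ifs <;> simp }
  let Φ : (G.edgeSet → ℝ) →ₗ[ℝ] ((Fin n ⊕ (G.edgeSet ⊕ Σ _ : G.edgeSet, Fin t)) → ℝ) :=
    { toFun := fun z => Sum.elim (fun _ => 0)
        (Sum.elim (fun e => ((t:ℝ) * ((Real.sqrt ((t:ℝ)+2))⁻¹ * (Real.sqrt ((r1:ℝ)+1))⁻¹)) * z e) (fun p => (1 - α) * z p.1))
      map_add' := by
        intro z z'; funext i
        rcases i with v | e | p <;>
          simp [Sum.elim_inl, Sum.elim_inr, Pi.add_apply, mul_add]
      map_smul' := by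
        intro c z; funext i
        rcases i with v | e | p <;>
          simp [Sum.elim_inl, Sum.elim_inr, Pi.smul_apply, smul_eq_mul] <;> ring }
  have hx1 : ∀ z v, Φ z (Sum.inl v) = 0 := fun _ _ => rfl
  have hx2 : ∀ z e, Φ z (Sum.inr (Sum.inl e)) = ((t:ℝ) * ((Real.sqrt ((t:ℝ)+2))⁻¹ * (Real.sqrt ((r1:ℝ)+1))⁻¹)) * z e := fun _ _ => rfl
  have hx3 : ∀ (z) (p : Σ _ : G.edgeSet, Fin t),
      Φ z (Sum.inr (Sum.inr p)) = (1 - α) * z p.1 := fun _ _ => rfl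
  have hdI : ∀ e : G.edgeSet, cdeg (sec G (fun _ => t) H) (Sum.inr (Sum.inl e)) = t + 2 :=
    fun e => deg_I G H e
  have hdH : ∀ p : Σ _ : G.edgeSet, Fin t,
      cdeg (sec G (fun _ => t) H) (Sum.inr (Sum.inr p)) = r1 + 1 := fun p => deg_H G H r1 hH p
  have hP : ∀ (x : (Fin n ⊕ (G.edgeSet ⊕ Σ _ : G.edgeSet, Fin t)) → ℝ) (i : (Fin n ⊕ (G.edgeSet ⊕ Σ _ : G.edgeSet, Fin t))),
      (normLap (sec G (fun _ => t) H)).mulVec x i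
        = x i - (Real.sqrt (cdeg (sec G (fun _ => t) H) i))⁻¹
            * ∑ j : (Fin n ⊕ (G.edgeSet ⊕ Σ _ : G.edgeSet, Fin t)), (if (sec G (fun _ => t) H).Adj i j then (Real.sqrt (cdeg (sec G (fun _ => t) H) j))⁻¹ * x j else 0) := by
    intro x i
    unfold normLap
    rw [Matrix.sub_mulVec, Matrix.one_mulVec, Pi.sub_apply]
    congr 1
    rw [Matrix.mulVec, dotProduct, Finset.mul_sum]
    apply Finset.sum_congr rfl
    intro j _
    rw [Matrix.mul_diagonal, Matrix.diagonal_mul]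
    have hAdj : adjM (sec G (fun _ => t) H) i j = if (sec G (fun _ => t) H).Adj i j then 1 else 0 := by
      simp [adjM]
    rw [hAdj]
    split_ifs <;> ring
  have key : (1 - α) - (Real.sqrt ((r1:ℝ)+1))⁻¹ * ((Real.sqrt ((t:ℝ)+2))⁻¹ * ((t:ℝ) * ((Real.sqrt ((t:ℝ)+2))⁻¹ * (Real.sqrt ((r1:ℝ)+1))⁻¹)) + (r1:ℝ) * ((Real.sqrt ((r1:ℝ)+1))⁻¹ * (1 - α))) = α * (1 - α) := by
    have ht2 : ((t:ℝ)+2) ≠ 0 := by positivity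
    have hr2 : ((r1:ℝ)+1) ≠ 0 := by positivity
    have base : (1-α) - (t:ℝ)*((t:ℝ)+2)⁻¹*((r1:ℝ)+1)⁻¹ - r1*((r1:ℝ)+1)⁻¹*(1-α)
        = α*(1-α) := by
      field_simp
      ring_nf
      ring_nf at hα
      nlinarith [hα]
    calc (1 - α) - (Real.sqrt ((r1:ℝ)+1))⁻¹ * ((Real.sqrt ((t:ℝ)+2))⁻¹ * ((t:ℝ) * ((Real.sqrt ((t:ℝ)+2))⁻¹ * (Real.sqrt ((r1:ℝ)+1))⁻¹)) + (r1:ℝ) * ((Real.sqrt ((r1:ℝ)+1))⁻¹ * (1 - α)))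
        = (1-α) - (t:ℝ)*((Real.sqrt ((t:ℝ)+2))⁻¹*(Real.sqrt ((t:ℝ)+2))⁻¹)*((Real.sqrt ((r1:ℝ)+1))⁻¹*(Real.sqrt ((r1:ℝ)+1))⁻¹) - r1*((Real.sqrt ((r1:ℝ)+1))⁻¹*(Real.sqrt ((r1:ℝ)+1))⁻¹)*(1-α) := by ring
      _ = (1-α) - (t:ℝ)*((t:ℝ)+2)⁻¹*((r1:ℝ)+1)⁻¹ - r1*((r1:ℝ)+1)⁻¹*(1-α) := by
          rw [e1, e2]
      _ = α * (1-α) := base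
  have hmain : ∀ z ∈ LinearMap.ker L, (normLap (sec G (fun _ => t) H)).mulVec (Φ z) = α • (Φ z) := by
    intro z hz
    have hzv : ∀ v, (∑ e : G.edgeSet, if v ∈ (e : Sym2 (Fin n)) then z e else 0) = 0 :=
      fun v => congrFun (LinearMap.mem_ker.mp hz) v
    funext i
    rw [hP (Φ z) i, Pi.smul_apply, smul_eq_mul]
    rw [Fintype.sum_sum_type, Fintype.sum_sum_type, ← Finset.univ_sigma_univ]
    rcases i with v | e | ⟨e, w⟩
    · -- case inl v
      have h1 : ∑ v' : Fin n, (if (sec G (fun _ => t) H).Adj (Sum.inl v) (Sum.inl v')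
          then (Real.sqrt (cdeg (sec G (fun _ => t) H) (Sum.inl v')))⁻¹ * (Φ z) (Sum.inl v') else 0) = 0 := by
        apply Finset.sum_eq_zero; intro v' _
        simp only [hx1, mul_zero, ite_self]
      have h2 : ∑ e : G.edgeSet, (if (sec G (fun _ => t) H).Adj (Sum.inl v) (Sum.inr (Sum.inl e))
          then (Real.sqrt (cdeg (sec G (fun _ => t) H) (Sum.inr (Sum.inl e))))⁻¹ * (Φ z) (Sum.inr (Sum.inl e)) else 0)
          = 0 := by
        have hterm : ∀ e : G.edgeSet, (if (sec G (fun _ => t) H).Adj (Sum.inl v) (Sum.inr (Sum.inl e))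
            then (Real.sqrt (cdeg (sec G (fun _ => t) H) (Sum.inr (Sum.inl e))))⁻¹ * (Φ z) (Sum.inr (Sum.inl e)) else 0)
            = ((Real.sqrt ((t:ℝ)+2))⁻¹ * ((t:ℝ) * ((Real.sqrt ((t:ℝ)+2))⁻¹ * (Real.sqrt ((r1:ℝ)+1))⁻¹))) * (if v ∈ (e : Sym2 (Fin n)) then z e else 0) := by
          intro e
          simp only [hx2, hdI e, adj_VI]
          push_cast
          split_ifs <;> ring
        rw [Finset.sum_congr rfl (fun e _ => hterm e), ← Finset.mul_sum, hzv, mul_zero]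
      have h3 : ∑ p ∈ (Finset.univ.sigma fun _ => (Finset.univ : Finset (Fin t))),
          (if (sec G (fun _ => t) H).Adj (Sum.inl v) (Sum.inr (Sum.inr p))
           then (Real.sqrt (cdeg (sec G (fun _ => t) H) (Sum.inr (Sum.inr p))))⁻¹ * (Φ z) (Sum.inr (Sum.inr p)) else 0)
          = 0 := by
        apply Finset.sum_eq_zero; intro p _
        rw [if_neg (adj_VH G H v p)]
      rw [h1, h2, h3, hx1]
      ring
    · -- case inr (inl e)
      have h1 : ∑ v' : Fin n, (if (sec G (fun _ => t) H).Adj (Sum.inr (Sum.inl e)) (Sum.inl v')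
          then (Real.sqrt (cdeg (sec G (fun _ => t) H) (Sum.inl v')))⁻¹ * (Φ z) (Sum.inl v') else 0) = 0 := by
        apply Finset.sum_eq_zero; intro v' _
        simp only [hx1, mul_zero, ite_self]
      have h2 : ∑ e' : G.edgeSet, (if (sec G (fun _ => t) H).Adj (Sum.inr (Sum.inl e)) (Sum.inr (Sum.inl e'))
          then (Real.sqrt (cdeg (sec G (fun _ => t) H) (Sum.inr (Sum.inl e'))))⁻¹ * (Φ z) (Sum.inr (Sum.inl e')) else 0)
          = 0 := by
        apply Finset.sum_eq_zero; intro e' _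
        rw [if_neg (adj_II G H e e')]
      have h3 : ∑ p ∈ (Finset.univ.sigma fun _ => (Finset.univ : Finset (Fin t))),
          (if (sec G (fun _ => t) H).Adj (Sum.inr (Sum.inl e)) (Sum.inr (Sum.inr p))
           then (Real.sqrt (cdeg (sec G (fun _ => t) H) (Sum.inr (Sum.inr p))))⁻¹ * (Φ z) (Sum.inr (Sum.inr p)) else 0)
          = t * ((Real.sqrt ((r1:ℝ)+1))⁻¹ * ((1 - α) * z e)) := by
        rw [Finset.sum_sigma]
        have inner : ∀ f : G.edgeSet, (∑ w' : Fin t,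
            (if (sec G (fun _ => t) H).Adj (Sum.inr (Sum.inl e)) (Sum.inr (Sum.inr ⟨f, w'⟩))
             then (Real.sqrt (cdeg (sec G (fun _ => t) H) (Sum.inr (Sum.inr ⟨f, w'⟩))))⁻¹
                * (Φ z) (Sum.inr (Sum.inr ⟨f, w'⟩)) else 0))
            = if e = f then (t : ℝ) * ((Real.sqrt ((r1:ℝ)+1))⁻¹ * ((1 - α) * z f)) else 0 := by
          intro f
          have hterm : ∀ w' : Fin t, (if (sec G (fun _ => t) H).Adj (Sum.inr (Sum.inl e)) (Sum.inr (Sum.inr ⟨f, w'⟩))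
              then (Real.sqrt (cdeg (sec G (fun _ => t) H) (Sum.inr (Sum.inr ⟨f, w'⟩))))⁻¹
                * (Φ z) (Sum.inr (Sum.inr ⟨f, w'⟩)) else 0)
              = if e = f then (Real.sqrt ((r1:ℝ)+1))⁻¹ * ((1 - α) * z f) else 0 := by
            intro w'
            simp only [hx3, hdI, hdH, adj_IH]
            push_cast
            split_ifs <;> ring
          rw [Finset.sum_congr rfl (fun w' _ => hterm w')]
          rw [Finset.sum_const, Finset.card_univ, Fintype.card_fin]
          split_ifs <;> simp
        rw [Finset.sum_congr rfl (fun f _ => inner f), Finset.sum_ite_eq,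
          if_pos (Finset.mem_univ e)]
      rw [h1, h2, h3, hx2, hdI e]
      push_cast
      ring
    · -- case inr (inr ⟨e, w⟩)
      have h1 : ∑ v' : Fin n, (if (sec G (fun _ => t) H).Adj (Sum.inr (Sum.inr ⟨e, w⟩)) (Sum.inl v')
          then (Real.sqrt (cdeg (sec G (fun _ => t) H) (Sum.inl v')))⁻¹ * (Φ z) (Sum.inl v') else 0) = 0 := by
        apply Finset.sum_eq_zero; intro v' _
        simp only [hx1, mul_zero, ite_self]
      have h2 : ∑ e' : G.edgeSet, (if (sec G (fun _ => t) H).Adj (Sum.inr (Sum.inr ⟨e, w⟩)) (Sum.inr (Sum.inl e'))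
          then (Real.sqrt (cdeg (sec G (fun _ => t) H) (Sum.inr (Sum.inl e'))))⁻¹ * (Φ z) (Sum.inr (Sum.inl e')) else 0)
          = (Real.sqrt ((t:ℝ)+2))⁻¹ * (((t:ℝ) * ((Real.sqrt ((t:ℝ)+2))⁻¹ * (Real.sqrt ((r1:ℝ)+1))⁻¹)) * z e) := by
        have hterm : ∀ e' : G.edgeSet, (if (sec G (fun _ => t) H).Adj (Sum.inr (Sum.inr ⟨e, w⟩)) (Sum.inr (Sum.inl e'))
            then (Real.sqrt (cdeg (sec G (fun _ => t) H) (Sum.inr (Sum.inl e'))))⁻¹ * (Φ z) (Sum.inr (Sum.inl e')) else 0)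
            = if e' = e then (Real.sqrt ((t:ℝ)+2))⁻¹ * (((t:ℝ) * ((Real.sqrt ((t:ℝ)+2))⁻¹ * (Real.sqrt ((r1:ℝ)+1))⁻¹)) * z e') else 0 := by
          intro e'
          have hadj : (sec G (fun _ => t) H).Adj (Sum.inr (Sum.inr ⟨e, w⟩)) (Sum.inr (Sum.inl e')) ↔ e' = e := by
            rw [SimpleGraph.adj_comm]
            exact adj_IH G H e' ⟨e, w⟩
          simp only [hx2, hdI e', hadj]
          push_cast
          split_ifs <;> ring
        rw [Finset.sum_congr rfl (fun e' _ => hterm e'), Finset.sum_ite_eq',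
          if_pos (Finset.mem_univ e)]
      have h3 : ∑ p ∈ (Finset.univ.sigma fun _ => (Finset.univ : Finset (Fin t))),
          (if (sec G (fun _ => t) H).Adj (Sum.inr (Sum.inr ⟨e, w⟩)) (Sum.inr (Sum.inr p))
           then (Real.sqrt (cdeg (sec G (fun _ => t) H) (Sum.inr (Sum.inr p))))⁻¹ * (Φ z) (Sum.inr (Sum.inr p)) else 0)
          = (r1 : ℝ) * ((Real.sqrt ((r1:ℝ)+1))⁻¹ * ((1 - α) * z e)) := by
        rw [Finset.sum_sigma]
        rw [Finset.sum_eq_single e]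
        · have hterm : ∀ w' : Fin t,
              (if (sec G (fun _ => t) H).Adj (Sum.inr (Sum.inr ⟨e, w⟩)) (Sum.inr (Sum.inr ⟨e, w'⟩))
               then (Real.sqrt (cdeg (sec G (fun _ => t) H) (Sum.inr (Sum.inr ⟨e, w'⟩))))⁻¹
                  * (Φ z) (Sum.inr (Sum.inr ⟨e, w'⟩)) else 0)
              = if (H e).Adj w w' then (Real.sqrt ((r1:ℝ)+1))⁻¹ * ((1 - α) * z e) else 0 := by
            intro w'
            have hadj : (sec G (fun _ => t) H).Adj (Sum.inr (Sum.inr ⟨e, w⟩)) (Sum.inr (Sum.inr ⟨e, w'⟩))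
                ↔ (H e).Adj w w' := by
              rw [adj_HH]
              exact and_iff_right rfl
            simp only [hx3, hdH, hadj]
            push_cast
            split_ifs <;> ring
          rw [Finset.sum_congr rfl (fun w' _ => hterm w'), sum_adj_real (H e) w, hH e w]
        · intro f _ hf
          apply Finset.sum_eq_zero
          intro w' _
          rw [if_neg]
          rw [adj_HH]
          rintro ⟨hc, -⟩
          exact hf hc.symm
        · intro hc; exact absurd (Finset.mem_univ e) hc
      rw [h1, h2, h3, hx3, hdH ⟨e, w⟩]
      push_cast
      have hzp : z (⟨e, w⟩ : Σ _ : G.edgeSet, Fin t).1 = z e := rfl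
      rw [hzp]
      linear_combination z e * key
  have hcard : Fintype.card G.edgeSet = m := by
    rw [← hm, SimpleGraph.edgeFinset, Set.toFinset_card]
  have hinj : Function.Injective Φ := by
    intro z1 z2 h
    funext e
    have h0 : ((t:ℝ) * ((Real.sqrt ((t:ℝ)+2))⁻¹ * (Real.sqrt ((r1:ℝ)+1))⁻¹)) * z1 e = ((t:ℝ) * ((Real.sqrt ((t:ℝ)+2))⁻¹ * (Real.sqrt ((r1:ℝ)+1))⁻¹)) * z2 e := congrFun h (Sum.inr (Sum.inl e))
    have ha0 : ((t:ℝ) * ((Real.sqrt ((t:ℝ)+2))⁻¹ * (Real.sqrt ((r1:ℝ)+1))⁻¹)) ≠ 0 := by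
      have h1 : (t:ℝ) ≠ 0 := by
        have : (1:ℝ) ≤ (t:ℝ) := by exact_mod_cast ht
        linarith
      positivity
    exact mul_left_cancel₀ ha0 h0
  have hWeig : ∀ x ∈ (LinearMap.ker L).map Φ, (normLap (sec G (fun _ => t) H)).mulVec x = α • x := by
    rintro x ⟨z, hz, rfl⟩
    exact hmain z hz
  have hdim : m - n ≤ Module.finrank ℝ ((LinearMap.ker L).map Φ) := by
    have hrk := LinearMap.finrank_range_add_finrank_ker L
    have hle : Module.finrank ℝ (LinearMap.range L) ≤ n := by
      have h1 := Submodule.finrank_le (LinearMap.range L)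
      rwa [Module.finrank_fintype_fun_eq_card, Fintype.card_fin] at h1
    have hdom : Module.finrank ℝ (G.edgeSet → ℝ) = m := by
      rw [Module.finrank_fintype_fun_eq_card, hcard]
    have heq : Module.finrank ℝ (LinearMap.ker L)
        = Module.finrank ℝ ((LinearMap.ker L).map Φ) :=
      LinearEquiv.finrank_eq (Submodule.equivMapOfInjective Φ hinj (LinearMap.ker L))
    omega
  exact dvd_trans (pow_dvd_pow _ hdim)
    (lemA (normLap (sec G (fun _ => t) H)) α ((LinearMap.ker L).map Φ) hWeig)
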